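/- arXiv:2512.03325 — 3 statements merged into one kernel-verified Lean document; each statement's English description precedes it below -/
import Mathlib

section
/- Concentration of the norm of degree-k Hermite features (Lemma F.1). Fix an integer k ≥ 1. There exist constants C, C', c > 0 depending only on k such that for every d ≥ 1, if x ~ N(0, I_d), then with probability at least 1 − C·e^{−cd} one has ‖h_k(x)‖₂² = Σ_{𝐤∈ℕ^d: ‖𝐤‖₁=k} He_𝐤(x)² ≤ C'·d^k. -/
/-!
Concentration of the norm of degree-`k` Hermite features (Lemma F.1).
-/

noncomputable section

open MeasureTheory ProbabilityTheory

/-- The degree-`k` orthonormal probabilist's Hermite polynomial, normalized so that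
`E[He j G * He k G] = 1{j=k}` for `G ~ N(0,1)`. -/
def He (k : ℕ) (x : ℝ) : ℝ :=
  (Polynomial.aeval x (Polynomial.hermite k)) / Real.sqrt (Nat.factorial k)

/-- Multi-indices on `Fin d` of total degree `k` (an index set of cardinality `B_{d,k}`). -/
abbrev MIdx (d k : ℕ) : Type :=
  {κ : Fin d → ℕ // κ ∈ Finset.Nat.antidiagonalTuple d k}

/-- The vector `h_k(x)` of all degree-`k` multivariate Hermite polynomials. -/
def hvec (d k : ℕ) (x : Fin d → ℝ) : MIdx d k → ℝ :=
  fun κ => ∏ i, He (κ.1 i) (x i)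

/-- The standard Gaussian measure on `ι → ℝ`. -/
def stdG (ι : Type*) [Fintype ι] : Measure (ι → ℝ) :=
  Measure.pi fun _ => gaussianReal 0 1

section Aux
open Polynomial Finset
open scoped ENNReal NNReal

lemma sq_eval_le (p : Polynomial ℝ) (n : ℕ) (hn : p.natDegree ≤ n) :
    ∃ C, 0 ≤ C ∧ ∀ x : ℝ, (p.eval x)^2 ≤ C * (1+x^2)^n := by
  refine ⟨((n:ℝ)+1) * ∑ m ∈ Finset.range (n+1), (p.coeff m)^2, by positivity, fun x => ?_⟩
  rw [Polynomial.eval_eq_sum_range' (Nat.lt_succ_of_le hn)]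
  calc (∑ m ∈ Finset.range (n+1), p.coeff m * x ^ m)^2
      ≤ (∑ m ∈ Finset.range (n+1), (p.coeff m)^2) * ∑ m ∈ Finset.range (n+1), (x^m)^2 :=
        Finset.sum_mul_sq_le_sq_mul_sq _ _ _
    _ ≤ (∑ m ∈ Finset.range (n+1), (p.coeff m)^2) * ∑ m ∈ Finset.range (n+1), (1+x^2)^n := by
        refine mul_le_mul_of_nonneg_left (Finset.sum_le_sum fun m hm => ?_) (by positivity)
        rw [← pow_mul, mul_comm m 2, pow_mul]
        exact (pow_le_pow_left₀ (sq_nonneg x) (by nlinarith [sq_nonneg x]) m).trans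
          (pow_le_pow_right₀ (by nlinarith [sq_nonneg x]) (Nat.lt_succ_iff.1 (Finset.mem_range.1 hm)))
    _ = ((n:ℝ)+1) * ∑ m ∈ Finset.range (n+1), (p.coeff m)^2 * (1+x^2)^n := by
        rw [Finset.sum_const, Finset.card_range, ← Finset.sum_mul]; push_cast; ring
    _ ≤ _ := by rw [← Finset.sum_mul]; exact le_of_eq (by ring)

lemma He_bound (k : ℕ) : ∃ B : ℝ, 1 ≤ B ∧ ∀ j, 1 ≤ j → j ≤ k → ∀ x : ℝ,
    ((Polynomial.aeval x (Polynomial.hermite j) : ℝ))^2 ≤ (B*(1+x^2))^j := by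
  have h : ∀ j : ℕ, ∃ C, 0 ≤ C ∧ ∀ x : ℝ,
      (((Polynomial.hermite j).map (Int.castRingHom ℝ)).eval x)^2 ≤ C * (1+x^2)^j := fun j =>
    sq_eval_le _ j (Polynomial.natDegree_map_le.trans (by rw [Polynomial.natDegree_hermite]))
  choose Cf hC0 hC using h
  refine ⟨1 + ∑ j ∈ Finset.range (k+1), Cf j, by { have := Finset.sum_nonneg (fun i (_ : i ∈ Finset.range (k+1)) => hC0 i); linarith }, fun j hj1 hjk x => ?_⟩
  have hx : (0:ℝ) < 1 + x^2 := by positivity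
  have hB1 : (1:ℝ) ≤ 1 + ∑ j ∈ Finset.range (k+1), Cf j := by
    have : (0:ℝ) ≤ ∑ j ∈ Finset.range (k+1), Cf j := Finset.sum_nonneg fun i _ => hC0 i
    linarith
  have hCB : Cf j ≤ 1 + ∑ j ∈ Finset.range (k+1), Cf j := by
    have h1 : Cf j ≤ ∑ j ∈ Finset.range (k+1), Cf j :=
      Finset.single_le_sum (fun i _ => hC0 i) (Finset.mem_range.2 (by omega))
    linarith
  have key : (Polynomial.aeval x (Polynomial.hermite j) : ℝ) =
      ((Polynomial.hermite j).map (Int.castRingHom ℝ)).eval x := by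
    rw [Polynomial.eval_map, Polynomial.aeval_def]; rfl
  rw [key]
  calc (((Polynomial.hermite j).map (Int.castRingHom ℝ)).eval x)^2
      ≤ Cf j * (1+x^2)^j := hC j x
    _ ≤ (1 + ∑ j ∈ Finset.range (k+1), Cf j) * (1+x^2)^j := by
        exact mul_le_mul_of_nonneg_right hCB (by positivity)
    _ ≤ (1 + ∑ j ∈ Finset.range (k+1), Cf j)^j * (1+x^2)^j := by
        exact mul_le_mul_of_nonneg_right (le_self_pow₀ hB1 (by omega)) (by positivity)
    _ = _ := (mul_pow _ _ _).symm

lemma multinomial_le (d k : ℕ) (Z : Fin d → ℝ) (hZ : ∀ i, 0 ≤ Z i) :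
    ∑ κ ∈ Finset.Nat.antidiagonalTuple d k, ∏ i, Z i ^ κ i ≤ (∑ i, Z i)^k := by
  have hset : Finset.Nat.antidiagonalTuple d k = Finset.piAntidiag Finset.univ k := by
    ext f
    simp [Finset.Nat.mem_antidiagonalTuple, Finset.mem_piAntidiag]
  rw [hset, Finset.sum_pow_eq_sum_piAntidiag]
  refine Finset.sum_le_sum fun f hf => ?_
  have h1 : (1:ℝ) ≤ (Nat.multinomial Finset.univ f : ℝ) := by
    exact_mod_cast Nat.one_le_iff_ne_zero.2 (Nat.multinomial_pos _ _).ne'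
  exact le_mul_of_one_le_left (Finset.prod_nonneg fun i _ => pow_nonneg (hZ i) _) h1

open Real in
lemma pdf_mul_g (x : ℝ) : Real.exp ((1/4) * x^2) * gaussianPDFReal 0 1 x
    = (Real.sqrt (2 * π))⁻¹ * Real.exp (-(1/4) * x^2) := by
  rw [gaussianPDFReal]
  push_cast
  rw [mul_one, sub_zero, mul_comm, mul_assoc, ← Real.exp_add]
  ring_nf

open Real in
lemma integrable_g : Integrable (fun x => Real.exp ((1/4) * x^2)) (gaussianReal 0 1) := by
  rw [gaussianReal_of_var_ne_zero 0 one_ne_zero,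
    integrable_withDensity_iff (measurable_gaussianPDF 0 1)
      (Filter.Eventually.of_forall fun x => ENNReal.ofReal_lt_top)]
  have : (fun x => Real.exp ((1/4) * x^2) * ((gaussianPDF 0 1 x).toReal))
      = fun x => (Real.sqrt (2 * π))⁻¹ * Real.exp (-(1/4) * x^2) := by
    funext x
    rw [gaussianPDF, ENNReal.toReal_ofReal (gaussianPDFReal_nonneg 0 1 x), pdf_mul_g]
  rw [this]
  exact (integrable_exp_neg_mul_sq (by norm_num : (0:ℝ) < 1/4)).const_mul _

open Real in
lemma integral_g : ∫ x, Real.exp ((1/4) * x^2) ∂(gaussianReal 0 1) = Real.sqrt 2 := by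
  rw [gaussianReal_of_var_ne_zero 0 one_ne_zero]
  have hd : (gaussianPDF 0 1) = fun x => ((gaussianPDFReal 0 1 x).toNNReal : ℝ≥0∞) := by
    funext x; rw [gaussianPDF]; rfl
  rw [hd, integral_withDensity_eq_integral_smul
    (by exact (measurable_gaussianPDFReal 0 1).real_toNNReal) _]
  have : (fun x => ((gaussianPDFReal 0 1 x).toNNReal : ℝ≥0) • Real.exp ((1/4) * x^2))
      = fun x => (Real.sqrt (2 * π))⁻¹ * Real.exp (-(1/4) * x^2) := by
    funext x
    rw [NNReal.smul_def, smul_eq_mul, Real.coe_toNNReal _ (gaussianPDFReal_nonneg 0 1 x),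
      mul_comm, pdf_mul_g]
  rw [this, integral_const_mul, integral_gaussian, ← Real.sqrt_inv, ← Real.sqrt_mul (by positivity)]
  rw [show (2*π)⁻¹ * (π / (1/4)) = 2 by field_simp; ring]

lemma integrable_prod_g (d : ℕ) :
    Integrable (fun x : Fin d → ℝ => ∏ i, Real.exp ((1/4)*(x i)^2))
      (Measure.pi fun _ : Fin d => gaussianReal 0 1) := by
  letI : MeasureSpace ℝ := ⟨gaussianReal 0 1⟩
  haveI : SigmaFinite (volume : Measure ℝ) := by
    change SigmaFinite (gaussianReal 0 1); infer_instance
  have h := MeasureTheory.Integrable.fintype_prod (ι := Fin d)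
    (f := fun _ y => Real.exp ((1/4)*y^2)) (fun _ => integrable_g)
  have hvol : (volume : Measure (Fin d → ℝ)) = Measure.pi fun _ : Fin d => gaussianReal 0 1 :=
    rfl
  exact h

lemma integral_prod_g (d : ℕ) :
    ∫ x : Fin d → ℝ, ∏ i, Real.exp ((1/4)*(x i)^2) ∂(Measure.pi fun _ : Fin d => gaussianReal 0 1)
      = (Real.sqrt 2)^d := by
  letI : MeasureSpace ℝ := ⟨gaussianReal 0 1⟩
  haveI : SigmaFinite (volume : Measure ℝ) := by
    change SigmaFinite (gaussianReal 0 1); infer_instance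
  have h := MeasureTheory.integral_fintype_prod_eq_prod (ι := Fin d)
    (f := fun _ y => Real.exp ((1/4)*y^2)) (μ := fun _ => gaussianReal 0 1)
  have hvol : (volume : Measure (Fin d → ℝ)) = Measure.pi fun _ : Fin d => gaussianReal 0 1 :=
    rfl
  rw [h, Finset.prod_const, Finset.card_univ, Fintype.card_fin,
    integral_g]

lemma sqrt_two_le : Real.sqrt 2 * Real.exp (-(3/4)) ≤ Real.exp (-(1/20)) := by
  have h2 : (2:ℝ) ≤ Real.exp (7/10) ^ 2 := by
    rw [← Real.exp_nat_mul]
    have := Real.add_one_le_exp ((2:ℕ) * (7/10) : ℝ)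
    push_cast at this ⊢
    linarith
  have hs : Real.sqrt 2 ≤ Real.exp (7/10) := by
    calc Real.sqrt 2 ≤ Real.sqrt (Real.exp (7/10)^2) := Real.sqrt_le_sqrt h2
      _ = Real.exp (7/10) := Real.sqrt_sq (Real.exp_pos _).le
  calc Real.sqrt 2 * Real.exp (-(3/4)) ≤ Real.exp (7/10) * Real.exp (-(3/4)) :=
        mul_le_mul_of_nonneg_right hs (Real.exp_pos _).le
    _ = Real.exp (-(1/20)) := by rw [← Real.exp_add]; norm_num

lemma chernoff (d : ℕ) :
    (Measure.pi fun _ : Fin d => gaussianReal 0 1) {x | (3:ℝ)*d ≤ ∑ i, (x i)^2}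
      ≤ ENNReal.ofReal (Real.exp (-(1/20 * d))) := by
  set μ := Measure.pi fun _ : Fin d => gaussianReal 0 1 with hμ
  haveI : IsProbabilityMeasure μ := by rw [hμ]; infer_instance
  have hfun : (fun x : Fin d → ℝ => Real.exp ((1/4) * ∑ i, (x i)^2))
      = fun x => ∏ i, Real.exp ((1/4)*(x i)^2) := by
    funext x
    rw [Finset.mul_sum, Real.exp_sum]
  have hint : Integrable (fun x : Fin d → ℝ => Real.exp ((1/4) * ∑ i, (x i)^2)) μ := by
    rw [hfun, hμ]; exact integrable_prod_g d
  have key := measure_ge_le_exp_mul_mgf (μ := μ) (X := fun x => ∑ i, (x i)^2)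
    (t := 1/4) ((3:ℝ)*d) (by norm_num) hint
  have hmgf : mgf (fun x : Fin d → ℝ => ∑ i, (x i)^2) μ (1/4) = (Real.sqrt 2)^d := by
    rw [mgf]
    rw [show (fun x : Fin d → ℝ => Real.exp ((1/4) * ∑ i, (x i)^2))
        = fun x => ∏ i, Real.exp ((1/4)*(x i)^2) from hfun]
    rw [hμ]; exact integral_prod_g d
  rw [hmgf] at key
  have hb : Real.exp (-(1/4) * (3*d)) * (Real.sqrt 2)^d ≤ Real.exp (-(1/20 * d)) := by
    have : Real.exp (-(1/4) * (3*d)) = (Real.exp (-(3/4)))^d := by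
      rw [← Real.exp_nat_mul]; ring_nf
    rw [this, ← mul_pow]
    calc (Real.exp (-(3/4)) * Real.sqrt 2)^d ≤ (Real.exp (-(1/20)))^d := by
          apply pow_le_pow_left₀ (by positivity)
          rw [mul_comm]; exact sqrt_two_le
      _ = Real.exp (-(1/20 * d)) := by rw [← Real.exp_nat_mul]; ring_nf
  have := le_trans key hb
  calc μ {x | (3:ℝ)*d ≤ ∑ i, (x i)^2}
      = ENNReal.ofReal ((μ {x | (3:ℝ)*d ≤ ∑ i, (x i)^2}).toReal) :=
        (ENNReal.ofReal_toReal (measure_ne_top _ _)).symm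
    _ ≤ ENNReal.ofReal (Real.exp (-(1/20 * d))) := ENNReal.ofReal_le_ofReal this

lemma He_sq_le (k : ℕ) {B : ℝ} (hB1 : 1 ≤ B)
    (hB : ∀ j, 1 ≤ j → j ≤ k → ∀ x : ℝ,
      ((Polynomial.aeval x (Polynomial.hermite j) : ℝ))^2 ≤ (B*(1+x^2))^j)
    {j : ℕ} (hjk : j ≤ k) (y : ℝ) : (He j y)^2 ≤ (B*(1+y^2))^j := by
  rcases Nat.eq_zero_or_pos j with hj | hj
  · subst hj
    simp [He, Polynomial.hermite_zero]
  · have h1 : (He j y)^2 = (Polynomial.aeval y (Polynomial.hermite j) : ℝ)^2 / (j.factorial : ℝ) := by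
      rw [He, div_pow, Real.sq_sqrt (by positivity)]
    rw [h1]
    calc (Polynomial.aeval y (Polynomial.hermite j) : ℝ)^2 / (j.factorial : ℝ)
        ≤ (Polynomial.aeval y (Polynomial.hermite j) : ℝ)^2 :=
          div_le_self (sq_nonneg _) (by exact_mod_cast j.factorial_pos)
      _ ≤ (B*(1+y^2))^j := hB j hj hjk y

lemma pointwise_bound (d k : ℕ) {B : ℝ} (hB1 : 1 ≤ B)
    (hB : ∀ j, 1 ≤ j → j ≤ k → ∀ x : ℝ,
      ((Polynomial.aeval x (Polynomial.hermite j) : ℝ))^2 ≤ (B*(1+x^2))^j)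
    (x : Fin d → ℝ) :
    ∑ κ : MIdx d k, (hvec d k x κ)^2 ≤ (∑ i, B*(1+(x i)^2))^k := by
  have h0 : ∑ κ : MIdx d k, (hvec d k x κ)^2
      = ∑ κ ∈ Finset.Nat.antidiagonalTuple d k, ∏ i, (He (κ i) (x i))^2 := by
    rw [← Finset.sum_coe_sort (Finset.Nat.antidiagonalTuple d k)
      (fun κ => ∏ i, (He (κ i) (x i))^2)]
    exact Finset.sum_congr rfl fun κ _ => by rw [hvec, ← Finset.prod_pow]
  rw [h0]
  calc ∑ κ ∈ Finset.Nat.antidiagonalTuple d k, ∏ i, (He (κ i) (x i))^2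
      ≤ ∑ κ ∈ Finset.Nat.antidiagonalTuple d k, ∏ i, (B*(1+(x i)^2))^(κ i) := by
        refine Finset.sum_le_sum fun κ hκ => Finset.prod_le_prod
          (fun i _ => sq_nonneg _) (fun i _ => ?_)
        have hsum : ∑ i, κ i = k := (Finset.Nat.mem_antidiagonalTuple).1 hκ
        have hik : κ i ≤ k := by
          rw [← hsum]
          exact Finset.single_le_sum (fun i _ => Nat.zero_le _) (Finset.mem_univ i)
        exact He_sq_le k hB1 hB hik (x i)
    _ ≤ (∑ i, B*(1+(x i)^2))^k :=
        multinomial_le d k _ (fun i => by positivity)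

end Aux

/-- **Lemma F.1**: For fixed `k ≥ 1` there are constants `C, C', c > 0` depending only on `k`
such that for every `d ≥ 1`, if `x ~ N(0, I_d)`, then with probability at least
`1 - C e^{-cd}` one has `‖h_k(x)‖₂² ≤ C' d^k`. -/
theorem hermite_features_norm_concentration (k : ℕ) (hk : 1 ≤ k) :
    ∃ C C' c : ℝ, 0 < C ∧ 0 < C' ∧ 0 < c ∧
      ∀ d : ℕ, 1 ≤ d →
        1 - ENNReal.ofReal (C * Real.exp (-(c * d))) ≤
          stdG (Fin d) {x | ∑ κ : MIdx d k, (hvec d k x κ) ^ 2 ≤ C' * (d : ℝ) ^ k} := by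
  obtain ⟨B, hB1, hB⟩ := He_bound k
  have hB0 : (0:ℝ) < B := lt_of_lt_of_le one_pos hB1
  refine ⟨1, (4*B)^k, 1/20, one_pos, by positivity, by norm_num, fun d hd => ?_⟩
  haveI : IsProbabilityMeasure (stdG (Fin d)) := by
    change IsProbabilityMeasure (Measure.pi fun _ : Fin d => gaussianReal 0 1)
    infer_instance
  set G := {x : Fin d → ℝ | ∑ κ : MIdx d k, (hvec d k x κ) ^ 2 ≤ (4*B)^k * (d : ℝ) ^ k}
    with hGdef
  have hHe : ∀ j : ℕ, Measurable (He j) := fun j =>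
    (Polynomial.continuous_aeval (Polynomial.hermite j)).measurable.div_const _
  have hGm : MeasurableSet G := by
    have hf : Measurable fun x : Fin d → ℝ => ∑ κ : MIdx d k, (hvec d k x κ)^2 := by
      refine Finset.measurable_sum _ fun κ _ => ?_
      have : Measurable fun x : Fin d → ℝ => hvec d k x κ := by
        refine Finset.measurable_prod _ fun i _ => ?_
        exact (hHe (κ.1 i)).comp (measurable_pi_apply i)
      exact this.pow_const 2
    exact measurableSet_le hf measurable_const
  have hsub : {x : Fin d → ℝ | ∑ i, (x i)^2 ≤ 3*d} ⊆ G := by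
    intro x hx
    simp only [Set.mem_setOf_eq] at hx ⊢
    have hZ : ∑ i, B*(1+(x i)^2) = B * ((d:ℝ) + ∑ i, (x i)^2) := by
      rw [← Finset.mul_sum, Finset.sum_add_distrib, Finset.sum_const, Finset.card_univ,
        Fintype.card_fin]
      simp [nsmul_eq_mul]
    calc ∑ κ : MIdx d k, (hvec d k x κ)^2
        ≤ (∑ i, B*(1+(x i)^2))^k := pointwise_bound d k hB1 hB x
      _ ≤ ((4*B)*(d:ℝ))^k := by
          refine pow_le_pow_left₀ (Finset.sum_nonneg fun i _ => by positivity) ?_ k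
          rw [hZ]
          nlinarith [hx, hB0]
      _ = (4*B)^k * (d:ℝ)^k := mul_pow _ _ _
  have hcompl : Gᶜ ⊆ {x : Fin d → ℝ | (3:ℝ)*d ≤ ∑ i, (x i)^2} := by
    intro x hx
    by_contra h
    simp only [Set.mem_setOf_eq, not_le] at h
    exact hx (hsub (le_of_lt h))
  have hμc : stdG (Fin d) Gᶜ ≤ ENNReal.ofReal (Real.exp (-(1/20 * d))) :=
    le_trans (measure_mono hcompl) (chernoff d)
  calc 1 - ENNReal.ofReal (1 * Real.exp (-(1/20 * d)))
      = 1 - ENNReal.ofReal (Real.exp (-(1/20 * d))) := by rw [one_mul]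
    _ ≤ 1 - stdG (Fin d) Gᶜ := tsub_le_tsub_left hμc 1
    _ = stdG (Fin d) G := by
        rw [measure_compl hGm (measure_ne_top _ _), measure_univ]
        exact ENNReal.sub_sub_cancel ENNReal.one_ne_top prob_le_one
end
end

section
/- Lipschitz continuity of the Moreau envelope of the loss (Proposition D.1). Let ℓ : ℝ×ℝ → ℝ be nonnegative, convex in its second argument, three times continuously differentiable, and suppose all of its first-, second- and third-order partial derivatives are bounded by a constant C₁. Then there exists a constant C > 0 depending only on C₁ such that for all y, y', z, z' ∈ ℝ and all γ, γ' > 0: |M_y(z; γ) − M_{y'}(z; γ)| ≤ C|y − y'|, |M_y(z; γ) − M_y(z'; γ)| ≤ C|z − z'|, and |M_y(z; γ) − M_y(z; γ')| ≤ C|γ − γ'|. -/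
/-!
Lipschitz continuity of the Moreau envelope of the loss (Proposition D.1).
-/

noncomputable section

/-- The Moreau envelope `M_y(z; γ) = min_x { ℓ(y,x) − ℓ(0,0) + (z−x)²/(2γ) }` of the
centered loss. -/
def Moreau (ℓ : ℝ → ℝ → ℝ) (y z γ : ℝ) : ℝ :=
  ⨅ x : ℝ, (ℓ y x - ℓ 0 0 + (z - x) ^ 2 / (2 * γ))

namespace MoreauAux

variable {C1 : ℝ} {ℓ : ℝ → ℝ → ℝ}

lemma real_le_of_forall_pos {a b : ℝ} (h : ∀ ε : ℝ, 0 < ε → a ≤ b + ε) : a ≤ b := by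
  by_contra hc
  push_neg at hc
  have := h ((a - b) / 2) (by linarith)
  linarith

/-- the objective is bounded below -/
lemma bdd (hpos : ∀ y v : ℝ, 0 ≤ ℓ y v) (y z γ : ℝ) (hγ : 0 < γ) :
    BddBelow (Set.range fun x : ℝ => ℓ y x - ℓ 0 0 + (z - x) ^ 2 / (2 * γ)) := by
  refine ⟨-ℓ 0 0, ?_⟩
  rintro a ⟨x, rfl⟩
  have h1 := hpos y x
  have h2 : 0 ≤ (z - x) ^ 2 / (2 * γ) := by positivity
  simp only
  linarith

/-- global Lipschitz bound for ℓ from the first-derivative bound. -/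
lemma lipF (hC1 : 0 < C1)
    (hd : ContDiff ℝ 3 (fun q : ℝ × ℝ => ℓ q.1 q.2))
    (hb : ∀ q : ℝ × ℝ, ‖iteratedFDeriv ℝ 1 (fun q : ℝ × ℝ => ℓ q.1 q.2) q‖ ≤ C1)
    (p q : ℝ × ℝ) : |ℓ p.1 p.2 - ℓ q.1 q.2| ≤ C1 * ‖p - q‖ := by
  have hdiff : Differentiable ℝ (fun q : ℝ × ℝ => ℓ q.1 q.2) :=
    hd.differentiable (by norm_num)
  have hfd : ∀ x : ℝ × ℝ, ‖fderiv ℝ (fun q : ℝ × ℝ => ℓ q.1 q.2) x‖ ≤ C1 := by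
    intro x
    have := hb x
    rwa [show ‖iteratedFDeriv ℝ 1 (fun q : ℝ × ℝ => ℓ q.1 q.2) x‖
        = ‖fderiv ℝ (fun q : ℝ × ℝ => ℓ q.1 q.2) x‖ from ?_] at this
    rw [← norm_iteratedFDeriv_fderiv (n := 0)]
    simp [norm_iteratedFDeriv_zero]
  have := (convex_univ (𝕜 := ℝ) (E := ℝ × ℝ)).norm_image_sub_le_of_norm_fderiv_le
      (f := fun q : ℝ × ℝ => ℓ q.1 q.2) (C := C1)
      (fun x _ => hdiff x) (fun x _ => hfd x) (Set.mem_univ q) (Set.mem_univ p)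
  simpa [Real.norm_eq_abs] using this

lemma lip_y (hC1 : 0 < C1)
    (hd : ContDiff ℝ 3 (fun q : ℝ × ℝ => ℓ q.1 q.2))
    (hb : ∀ q : ℝ × ℝ, ‖iteratedFDeriv ℝ 1 (fun q : ℝ × ℝ => ℓ q.1 q.2) q‖ ≤ C1)
    (y y' x : ℝ) : |ℓ y x - ℓ y' x| ≤ C1 * |y - y'| := by
  have := lipF hC1 hd hb (y, x) (y', x)
  simpa [Prod.norm_def, Real.norm_eq_abs, abs_nonneg] using this

lemma lip_x (hC1 : 0 < C1)
    (hd : ContDiff ℝ 3 (fun q : ℝ × ℝ => ℓ q.1 q.2))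
    (hb : ∀ q : ℝ × ℝ, ‖iteratedFDeriv ℝ 1 (fun q : ℝ × ℝ => ℓ q.1 q.2) q‖ ≤ C1)
    (y a b : ℝ) : |ℓ y a - ℓ y b| ≤ C1 * |a - b| := by
  have := lipF hC1 hd hb (y, a) (y, b)
  simpa [Prod.norm_def, Real.norm_eq_abs, abs_nonneg] using this

/-- generic comparison of infima -/
lemma inf_le_inf_add {f g : ℝ → ℝ} (hf : BddBelow (Set.range f)) (c : ℝ)
    (h : ∀ x : ℝ, ∃ x' : ℝ, f x' ≤ g x + c) : iInf f ≤ iInf g + c := by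
  rw [← sub_le_iff_le_add]
  refine le_ciInf fun x => ?_
  obtain ⟨x', h'⟩ := h x
  have := ciInf_le hf x'
  linarith

end MoreauAux


namespace MoreauAux

/-- local Lipschitz estimate in γ, for γ' ≤ 2γ -/
lemma local_gamma (hC1 : 0 < C1) (hpos : ∀ y v : ℝ, 0 ≤ ℓ y v)
    (hd : ContDiff ℝ 3 (fun q : ℝ × ℝ => ℓ q.1 q.2))
    (hb : ∀ q : ℝ × ℝ, ‖iteratedFDeriv ℝ 1 (fun q : ℝ × ℝ => ℓ q.1 q.2) q‖ ≤ C1)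
    (y z γ γ' : ℝ) (hγ : 0 < γ) (h12 : γ ≤ γ') (h21 : γ' ≤ 2 * γ) :
    Moreau ℓ y z γ ≤ Moreau ℓ y z γ' + 4 * C1 ^ 2 * (γ' - γ) := by
  have hγ' : 0 < γ' := lt_of_lt_of_le hγ h12
  unfold Moreau
  refine real_le_of_forall_pos fun δ hδ => ?_
  set ε := δ / 3 with hε
  have hεpos : 0 < ε := by positivity
  have hlt : (⨅ x : ℝ, (ℓ y x - ℓ 0 0 + (z - x) ^ 2 / (2 * γ')))
      < (⨅ x : ℝ, (ℓ y x - ℓ 0 0 + (z - x) ^ 2 / (2 * γ'))) + ε := by linarith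
  obtain ⟨x, hx⟩ := exists_lt_of_ciInf_lt hlt
  have hMz : (⨅ x : ℝ, (ℓ y x - ℓ 0 0 + (z - x) ^ 2 / (2 * γ'))) ≤ ℓ y z - ℓ 0 0 := by
    have := ciInf_le (bdd hpos y z γ' hγ') z
    simpa using this
  have hlx : ℓ y z - ℓ y x ≤ C1 * |z - x| :=
    le_trans (le_abs_self _) (by simpa [abs_sub_comm] using lip_x hC1 hd hb y z x)
  set A := (z - x) ^ 2 with hA
  have hAnn : 0 ≤ A := sq_nonneg _
  have key : A ≤ (C1 * |z - x| + ε) * (2 * γ') := by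
    have h2 : A / (2 * γ') ≤ C1 * |z - x| + ε := by linarith
    calc A = A / (2 * γ') * (2 * γ') := by field_simp
    _ ≤ (C1 * |z - x| + ε) * (2 * γ') := by
        apply mul_le_mul_of_nonneg_right h2 (by positivity)
  have hAle : A ≤ 4 * γ' ^ 2 * C1 ^ 2 + 4 * γ' * ε := by
    nlinarith [sq_nonneg (|z - x| - 2 * γ' * C1), sq_abs (z - x), abs_nonneg (z - x)]
  have h1 : (⨅ x : ℝ, (ℓ y x - ℓ 0 0 + (z - x) ^ 2 / (2 * γ)))
      ≤ ℓ y x - ℓ 0 0 + A / (2 * γ) := ciInf_le (bdd hpos y z γ hγ) x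
  set u := A / (2 * γ) with hu
  set v := A / (2 * γ') with hv
  have hu' : u * (2 * γ) = A := by rw [hu]; exact div_mul_cancel₀ A (by positivity)
  have hv' : v * (2 * γ') = A := by rw [hv]; exact div_mul_cancel₀ A (by positivity)
  have e : (u - v) * (2 * γ * γ') = A * (γ' - γ) := by linear_combination γ' * hu' - γ * hv'
  have hd0 : 0 ≤ γ' - γ := by linarith
  have h2g : 0 ≤ 2 * γ - γ' := by linarith
  have s1 : A * (γ' - γ) ≤ (4 * γ' ^ 2 * C1 ^ 2 + 4 * γ' * ε) * (γ' - γ) :=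
    mul_le_mul_of_nonneg_right hAle hd0
  have s3 : (4 * γ' ^ 2 * C1 ^ 2 + 4 * γ' * ε) * (γ' - γ)
      ≤ (4 * C1 ^ 2 * (γ' - γ) + 2 * ε) * (2 * γ * γ') := by
    nlinarith [mul_nonneg (mul_nonneg (mul_nonneg (sq_nonneg C1) hγ'.le) hd0) h2g,
      mul_nonneg (mul_nonneg hγ'.le hεpos.le) h2g]
  have huv : u - v ≤ 4 * C1 ^ 2 * (γ' - γ) + 2 * ε := by
    have hpos2 : (0:ℝ) < 2 * γ * γ' := by positivity
    have := e.le.trans (s1.trans s3)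
    exact le_of_mul_le_mul_right this hpos2
  linarith

end MoreauAux

namespace MoreauAux

lemma mono_gamma (hpos : ∀ y v : ℝ, 0 ≤ ℓ y v) (y z γ γ' : ℝ)
    (hγ : 0 < γ) (h12 : γ ≤ γ') : Moreau ℓ y z γ' ≤ Moreau ℓ y z γ := by
  have hγ' : 0 < γ' := lt_of_lt_of_le hγ h12
  unfold Moreau
  have := inf_le_inf_add (f := fun x : ℝ => ℓ y x - ℓ 0 0 + (z - x) ^ 2 / (2 * γ'))
    (g := fun x : ℝ => ℓ y x - ℓ 0 0 + (z - x) ^ 2 / (2 * γ))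
    (bdd hpos y z γ' hγ') 0 (fun x => ⟨x, by
      have : (z - x) ^ 2 / (2 * γ') ≤ (z - x) ^ 2 / (2 * γ) := by gcongr
      linarith⟩)
  simpa using this

lemma chain_gamma (hC1 : 0 < C1) (hpos : ∀ y v : ℝ, 0 ≤ ℓ y v)
    (hd : ContDiff ℝ 3 (fun q : ℝ × ℝ => ℓ q.1 q.2))
    (hb : ∀ q : ℝ × ℝ, ‖iteratedFDeriv ℝ 1 (fun q : ℝ × ℝ => ℓ q.1 q.2) q‖ ≤ C1)
    (y z : ℝ) : ∀ n : ℕ, ∀ γ γ' : ℝ, 0 < γ → γ ≤ γ' → γ' ≤ 2 ^ n * γ →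
      Moreau ℓ y z γ ≤ Moreau ℓ y z γ' + 4 * C1 ^ 2 * (γ' - γ) := by
  intro n
  induction n with
  | zero =>
    intro γ γ' hγ h12 h21
    have : γ' = γ := le_antisymm (by simpa using h21) h12
    subst this
    simp
  | succ n ih =>
    intro γ γ' hγ h12 h21
    by_cases hc : γ' ≤ 2 * γ
    · exact local_gamma hC1 hpos hd hb y z γ γ' hγ h12 hc
    · push_neg at hc
      set μ := γ' / 2 with hμ
      have hμγ : γ ≤ μ := by rw [hμ]; linarith
      have hμn : μ ≤ 2 ^ n * γ := by
        rw [hμ]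
        have : (2:ℝ) ^ (n+1) * γ = 2 * (2 ^ n * γ) := by ring
        rw [this] at h21
        linarith
      have h1 := ih γ μ hγ hμγ hμn
      have h2 := local_gamma hC1 hpos hd hb y z μ γ' (lt_of_lt_of_le hγ hμγ)
        (by rw [hμ]; linarith) (by rw [hμ]; linarith)
      have : μ - γ + (γ' - μ) = γ' - γ := by ring
      nlinarith [sq_nonneg C1]

lemma gamma_bound (hC1 : 0 < C1) (hpos : ∀ y v : ℝ, 0 ≤ ℓ y v)
    (hd : ContDiff ℝ 3 (fun q : ℝ × ℝ => ℓ q.1 q.2))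
    (hb : ∀ q : ℝ × ℝ, ‖iteratedFDeriv ℝ 1 (fun q : ℝ × ℝ => ℓ q.1 q.2) q‖ ≤ C1)
    (y z γ γ' : ℝ) (hγ : 0 < γ) (h12 : γ ≤ γ') :
    |Moreau ℓ y z γ - Moreau ℓ y z γ'| ≤ 4 * C1 ^ 2 * (γ' - γ) := by
  have hγ' : 0 < γ' := lt_of_lt_of_le hγ h12
  obtain ⟨n, hn⟩ := pow_unbounded_of_one_lt (γ' / γ) (one_lt_two (α := ℝ))
  have h21 : γ' ≤ 2 ^ n * γ := by
    rw [div_lt_iff₀ hγ] at hn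
    linarith
  have h1 := chain_gamma hC1 hpos hd hb y z n γ γ' hγ h12 h21
  have h2 := mono_gamma hpos y z γ γ' hγ h12
  rw [abs_le]
  constructor <;> nlinarith [sq_nonneg C1]

lemma aux_y (hC1 : 0 < C1) (hpos : ∀ y v : ℝ, 0 ≤ ℓ y v)
    (hd : ContDiff ℝ 3 (fun q : ℝ × ℝ => ℓ q.1 q.2))
    (hb : ∀ q : ℝ × ℝ, ‖iteratedFDeriv ℝ 1 (fun q : ℝ × ℝ => ℓ q.1 q.2) q‖ ≤ C1)
    (y y' z γ : ℝ) (hγ : 0 < γ) :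
    Moreau ℓ y z γ ≤ Moreau ℓ y' z γ + C1 * |y - y'| := by
  unfold Moreau
  exact inf_le_inf_add (bdd hpos y z γ hγ) _ (fun x => ⟨x, by
    have := (abs_le.1 (lip_y hC1 hd hb y y' x)).2
    linarith⟩)

lemma aux_z (hC1 : 0 < C1) (hpos : ∀ y v : ℝ, 0 ≤ ℓ y v)
    (hd : ContDiff ℝ 3 (fun q : ℝ × ℝ => ℓ q.1 q.2))
    (hb : ∀ q : ℝ × ℝ, ‖iteratedFDeriv ℝ 1 (fun q : ℝ × ℝ => ℓ q.1 q.2) q‖ ≤ C1)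
    (y z z' γ : ℝ) (hγ : 0 < γ) :
    Moreau ℓ y z γ ≤ Moreau ℓ y z' γ + C1 * |z - z'| := by
  unfold Moreau
  refine inf_le_inf_add (bdd hpos y z γ hγ) _ (fun x => ⟨x + (z - z'), ?_⟩)
  have h1 : z - (x + (z - z')) = z' - x := by ring
  rw [h1]
  have h2 := (abs_le.1 (lip_x hC1 hd hb y (x + (z - z')) x)).2
  have h3 : |x + (z - z') - x| = |z - z'| := by congr 1; ring
  rw [h3] at h2
  linarith

end MoreauAux


open MoreauAux

/-- **Proposition D.1**: if `ℓ` is nonnegative, convex in its second argument, three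
times continuously differentiable with all partial derivatives of orders 1–3 bounded by
`C₁`, then the Moreau envelope is Lipschitz in each of its three arguments, with a
Lipschitz constant depending only on `C₁`. -/
theorem moreau_envelope_lipschitz (C1 : ℝ) (hC1 : 0 < C1) :
    ∃ C : ℝ, 0 < C ∧
      ∀ ℓ : ℝ → ℝ → ℝ,
        (∀ y v : ℝ, 0 ≤ ℓ y v) →
        (∀ y : ℝ, ConvexOn ℝ Set.univ (ℓ y)) →
        ContDiff ℝ 3 (fun q : ℝ × ℝ => ℓ q.1 q.2) →
        (∀ i : ℕ, 1 ≤ i → i ≤ 3 →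
          ∀ q : ℝ × ℝ, ‖iteratedFDeriv ℝ i (fun q : ℝ × ℝ => ℓ q.1 q.2) q‖ ≤ C1) →
        ∀ y y' z z' γ γ' : ℝ, 0 < γ → 0 < γ' →
          |Moreau ℓ y z γ - Moreau ℓ y' z γ| ≤ C * |y - y'| ∧
          |Moreau ℓ y z γ - Moreau ℓ y z' γ| ≤ C * |z - z'| ∧
          |Moreau ℓ y z γ - Moreau ℓ y z γ'| ≤ C * |γ - γ'| := by
  refine ⟨C1 + 4 * C1 ^ 2, by positivity, ?_⟩
  intro ℓ hpos _hconv hd hball y y' z z' γ γ' hγ hγ'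
  have hb : ∀ q : ℝ × ℝ, ‖iteratedFDeriv ℝ 1 (fun q : ℝ × ℝ => ℓ q.1 q.2) q‖ ≤ C1 :=
    hball 1 le_rfl (by norm_num)
  have hCC : ∀ t : ℝ, C1 * |t| ≤ (C1 + 4 * C1 ^ 2) * |t| := fun t => by
    nlinarith [abs_nonneg t, sq_nonneg C1]
  have hCC' : ∀ t : ℝ, 4 * C1 ^ 2 * |t| ≤ (C1 + 4 * C1 ^ 2) * |t| := fun t => by
    nlinarith [abs_nonneg t]
  refine ⟨?_, ?_, ?_⟩
  · rw [abs_sub_le_iff]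
    constructor
    · have := aux_y hC1 hpos hd hb y y' z γ hγ
      exact le_trans (by linarith) (hCC _)
    · have := aux_y hC1 hpos hd hb y' y z γ hγ
      rw [abs_sub_comm] at this
      exact le_trans (by linarith) (hCC _)
  · rw [abs_sub_le_iff]
    constructor
    · have := aux_z hC1 hpos hd hb y z z' γ hγ
      exact le_trans (by linarith) (hCC _)
    · have := aux_z hC1 hpos hd hb y z' z γ hγ
      rw [abs_sub_comm] at this
      exact le_trans (by linarith) (hCC _)
  · rcases le_total γ γ' with h | h
    · have h1 := gamma_bound hC1 hpos hd hb y z γ γ' hγ h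
      have h2 : γ' - γ = |γ - γ'| := by
        rw [abs_sub_comm, abs_of_nonneg (by linarith)]
      rw [h2] at h1
      exact h1.trans (hCC' _)
    · have h1 := gamma_bound hC1 hpos hd hb y z γ' γ hγ' h
      rw [abs_sub_comm] at h1
      have h2 : γ - γ' = |γ - γ'| := by rw [abs_of_nonneg (by linarith)]
      rw [h2] at h1
      exact h1.trans (hCC' _)
end
end

section
/- Characterization of the minimizer of the quadratic surrogate via the Moreau envelope and proximal operator (Lemma D.2). Let ℓ : ℝ×ℝ → ℝ be nonnegative, convex in its second argument, three times continuously differentiable with all first-, second- and third-order partial derivatives bounded. Fix n > 0, p ≥ 1, y ∈ ℝ, z ∈ ℝ^p with z ≠ 0, θ̂ ∈ ℝ^p, c₀ ∈ ℝ, and a symmetric positive definite matrix H ∈ ℝ^{p×p}. Define R̃(θ) := c₀ + (1/n)(ℓ(y, ⟨θ, z⟩) − ℓ(0,0)) + (1/2)(θ − θ̂)ᵀH(θ − θ̂) and γ := zᵀH^{−1}z/n > 0. Then R̃ attains a unique minimizer θ̃ ∈ ℝ^p and: (i) min_θ R̃(θ) = c₀ + (1/n)·M_y(⟨z, θ̂⟩;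 γ); (ii) θ̃ = θ̂ − (1/n)·∂₂ℓ(y, ⟨z, θ̃⟩)·H^{−1}z, where ∂₂ℓ denotes the partial derivative of ℓ in its second argument; (iii) ⟨z, θ̃⟩ = Prox_y(⟨z, θ̂⟩; γ). -/
/-!
Characterization of the minimizer of the quadratic surrogate via the Moreau envelope
and proximal operator (Lemma D.2).
-/

noncomputable section

open MeasureTheory

/-- Euclidean dot product on `ι → ℝ`. -/
def dotp {ι : Type*} [Fintype ι] (u v : ι → ℝ) : ℝ := ∑ i, u i * v i

/-- The quadratic surrogate objective
`R̃(θ) = c₀ + (1/n)(ℓ(y,⟨θ,z⟩) − ℓ(0,0)) + (1/2)(θ−θ̂)ᵀ H (θ−θ̂)`. -/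
def quadSurrogate (p : ℕ) (n : ℕ) (ℓ : ℝ → ℝ → ℝ) (y : ℝ) (z θh : Fin p → ℝ)
    (c0 : ℝ) (H : Matrix (Fin p) (Fin p) ℝ) (θ : Fin p → ℝ) : ℝ :=
  c0 + (1 / (n : ℝ)) * (ℓ y (dotp θ z) - ℓ 0 0) +
    (1 / 2) * dotp (fun j => θ j - θh j) (H.mulVec fun j => θ j - θh j)

set_option maxHeartbeats 2000000 in
open Matrix in
/-- **Lemma D.2**: characterization of the minimizer of the quadratic surrogate in terms
of the Moreau envelope and the proximal operator of the loss. -/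
theorem quadratic_surrogate_minimizer (p : ℕ) (hp : 1 ≤ p) (n : ℕ) (hn : 0 < n)
    (ℓ : ℝ → ℝ → ℝ)
    (hℓ0 : ∀ y v : ℝ, 0 ≤ ℓ y v)
    (hℓconv : ∀ y : ℝ, ConvexOn ℝ Set.univ (ℓ y))
    (hℓsmooth : ContDiff ℝ 3 (fun q : ℝ × ℝ => ℓ q.1 q.2))
    (hℓbdd : ∃ C1 : ℝ, ∀ i : ℕ, 1 ≤ i → i ≤ 3 →
      ∀ q : ℝ × ℝ, ‖iteratedFDeriv ℝ i (fun q : ℝ × ℝ => ℓ q.1 q.2) q‖ ≤ C1)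
    (y : ℝ) (z : Fin p → ℝ) (hz : z ≠ 0) (θh : Fin p → ℝ) (c0 : ℝ)
    (H : Matrix (Fin p) (Fin p) ℝ) (hH : H.PosDef) :
    0 < dotp z (H⁻¹.mulVec z) / n ∧
    ∃ θt : Fin p → ℝ,
      (∀ θ : Fin p → ℝ, quadSurrogate p n ℓ y z θh c0 H θt ≤ quadSurrogate p n ℓ y z θh c0 H θ) ∧
      (∀ θ' : Fin p → ℝ,
        (∀ θ : Fin p → ℝ, quadSurrogate p n ℓ y z θh c0 H θ' ≤ quadSurrogate p n ℓ y z θh c0 H θ) →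
        θ' = θt) ∧
      (⨅ θ : Fin p → ℝ, quadSurrogate p n ℓ y z θh c0 H θ) =
        c0 + (1 / (n : ℝ)) * Moreau ℓ y (dotp z θh) (dotp z (H⁻¹.mulVec z) / n) ∧
      θt = (fun j => θh j - (1 / (n : ℝ)) * deriv (ℓ y) (dotp z θt) * H⁻¹.mulVec z j) ∧
      (∀ x : ℝ,
        ℓ y (dotp z θt) - ℓ 0 0 +
            (dotp z θh - dotp z θt) ^ 2 / (2 * (dotp z (H⁻¹.mulVec z) / n)) ≤
          ℓ y x - ℓ 0 0 + (dotp z θh - x) ^ 2 / (2 * (dotp z (H⁻¹.mulVec z) / n))) := by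

  classical
  have hdotp : ∀ (u v : Fin p → ℝ), dotp u v = u ⬝ᵥ v := fun u v => rfl
  have hcomm : ∀ (u v : Fin p → ℝ), dotp u v = dotp v u := by
    intro u v; simp [dotp, mul_comm]
  have hn' : (0:ℝ) < n := by exact_mod_cast hn
  set w : Fin p → ℝ := H⁻¹.mulVec z with hw
  have hqpos : 0 < dotp z w := by
    have := (hH.inv).dotProduct_mulVec_pos hz
    simpa [hdotp, hw] using this
  set q : ℝ := dotp z w with hqdef
  set γ : ℝ := q / n with hγdef
  have hγpos : 0 < γ := div_pos hqpos hn'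
  have hγn : γ * n = q := by
    rw [hγdef]; field_simp
  have hHsymm : Hᵀ = H := by simpa [Matrix.IsHermitian] using hH.1
  have hHw : H.mulVec w = z := by
    rw [hw, Matrix.mulVec_mulVec,
      Matrix.mul_nonsing_inv H (isUnit_iff_ne_zero.mpr hH.det_pos.ne'), Matrix.one_mulVec]
  have hsym : ∀ u v : Fin p → ℝ, u ⬝ᵥ H.mulVec v = H.mulVec u ⬝ᵥ v := by
    intro u v; rw [Matrix.dotProduct_mulVec, ← Matrix.mulVec_transpose, hHsymm]
  have hwHw : w ⬝ᵥ H.mulVec w = q := by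
    rw [hHw, hqdef, hdotp, dotProduct_comm]
  -- expansion identity
  have key0 : ∀ (δ : Fin p → ℝ) (t : ℝ),
      (δ - t • w) ⬝ᵥ H.mulVec (δ - t • w) = δ ⬝ᵥ H.mulVec δ - 2*t*(z ⬝ᵥ δ) + t^2*q := by
    intro δ t
    have h1 : w ⬝ᵥ H.mulVec δ = z ⬝ᵥ δ := by rw [hsym, hHw]
    have h2 : δ ⬝ᵥ H.mulVec w = z ⬝ᵥ δ := by rw [hHw, dotProduct_comm]
    simp only [Matrix.mulVec_sub, Matrix.mulVec_smul, dotProduct_sub,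
      sub_dotProduct, dotProduct_smul, smul_dotProduct, smul_eq_mul,
      h1, h2, hwHw]
    ring
  -- Cauchy–Schwarz type inequality and its equality case
  have hCS : ∀ δ : Fin p → ℝ, (z ⬝ᵥ δ)^2 / q ≤ δ ⬝ᵥ H.mulVec δ := by
    intro δ
    have h0 : 0 ≤ (δ - ((z ⬝ᵥ δ)/q) • w) ⬝ᵥ H.mulVec (δ - ((z ⬝ᵥ δ)/q) • w) := by
      rcases eq_or_ne (δ - ((z ⬝ᵥ δ)/q) • w) 0 with h | h
      · rw [h]; simp
      · exact (by have := hH.dotProduct_mulVec_pos h; rwa [star_trivial] at this : (0:ℝ) < _).le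
    rw [key0] at h0
    have hq0 : q ≠ 0 := hqpos.ne'
    have e : δ ⬝ᵥ H.mulVec δ - 2*((z ⬝ᵥ δ)/q)*(z ⬝ᵥ δ) + ((z ⬝ᵥ δ)/q)^2*q
        = δ ⬝ᵥ H.mulVec δ - (z ⬝ᵥ δ)^2/q := by
      field_simp; ring
    rw [e] at h0
    linarith
  have hCSeq : ∀ δ : Fin p → ℝ, δ ⬝ᵥ H.mulVec δ = (z ⬝ᵥ δ)^2 / q →
      δ = ((z ⬝ᵥ δ)/q) • w := by
    intro δ hδ
    have hq0 : q ≠ 0 := hqpos.ne'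
    have h0 : (δ - ((z ⬝ᵥ δ)/q) • w) ⬝ᵥ H.mulVec (δ - ((z ⬝ᵥ δ)/q) • w) = 0 := by
      rw [key0, hδ]; field_simp; ring
    by_contra hne
    have hne' : δ - ((z ⬝ᵥ δ)/q) • w ≠ 0 := sub_ne_zero.mpr hne
    exact absurd h0 (by have := hH.dotProduct_mulVec_pos hne'; rwa [star_trivial] at this : (0:ℝ) < _).ne'
  -- scalar problem
  set a : ℝ := dotp z θh with ha
  set g : ℝ → ℝ := fun x => ℓ y x - ℓ 0 0 + (a - x) ^ 2 / (2 * γ) with hg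
  have hly3 : ContDiff ℝ 3 (ℓ y) := hℓsmooth.comp (contDiff_const.prodMk contDiff_id)
  have hlyd : Differentiable ℝ (ℓ y) := hly3.differentiable (by norm_num)
  have hgcont : Continuous g := by
    have h1 : Continuous (fun x : ℝ => (a - x) ^ 2 / (2 * γ)) := by
      exact ((continuous_const.sub continuous_id).pow 2).div_const _
    exact (hly3.continuous.sub continuous_const).add h1
  -- existence of a minimizer of g
  have hexists : ∃ xs : ℝ, ∀ x : ℝ, g xs ≤ g x := by
    set R : ℝ := Real.sqrt (2 * γ * ℓ y a) with hR
    have hRnn : 0 ≤ R := Real.sqrt_nonneg _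
    have hR2 : R ^ 2 = 2 * γ * ℓ y a := Real.sq_sqrt (mul_nonneg (by positivity) (hℓ0 y a))
    have hout : ∀ x, x ∉ Set.Icc (a - R) (a + R) → g a < g x := by
      intro x hx
      have hx' : x < a - R ∨ a + R < x := by
        rcases lt_or_ge x (a - R) with h | h
        · exact Or.inl h
        · right
          by_contra hc
          exact hx ⟨h, not_lt.mp hc⟩
      have hsq : R ^ 2 < (a - x) ^ 2 := by
        rcases hx' with h | h
        · nlinarith
        · nlinarith
      have h1 : ℓ y a < (a - x) ^ 2 / (2 * γ) := by
        rw [lt_div_iff₀ (by positivity)]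
        nlinarith
      have h2 : g a = ℓ y a - ℓ 0 0 := by simp [hg]
      have h3 : ℓ y x - ℓ 0 0 + (a - x) ^ 2 / (2 * γ) > ℓ y a - ℓ 0 0 := by
        have := hℓ0 y x
        linarith
      rw [h2]; exact h3
    obtain ⟨xs, _, hmin⟩ := (isCompact_Icc (a := a - R) (b := a + R)).exists_isMinOn
      (Set.nonempty_Icc.mpr (by linarith)) hgcont.continuousOn
    refine ⟨xs, fun t => ?_⟩
    by_cases ht : t ∈ Set.Icc (a - R) (a + R)
    · exact hmin ht
    · exact le_trans (hmin (Set.mem_Icc.mpr ⟨by linarith, by linarith⟩)) (hout t ht).le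
  obtain ⟨xs, hxs⟩ := hexists
  -- strict convexity of g and uniqueness of its minimizer
  have hquad : StrictConvexOn ℝ (Set.univ : Set ℝ) (fun x => (a - x) ^ 2 / (2 * γ)) := by
    refine ⟨convex_univ, ?_⟩
    intro x _ u _ hxu s t hs ht hst
    simp only [smul_eq_mul]
    have hxu' : x - u ≠ 0 := sub_ne_zero.mpr hxu
    have h1 : 0 < (x - u) ^ 2 := by positivity
    have e : s*(a-x)^2 + t*(a-u)^2 - (a - (s*x+t*u))^2 = s*t*(x-u)^2 := by
      have htv : t = 1 - s := by linarith
      subst htv; ring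
    have key : (a - (s*x+t*u))^2 < s*(a-x)^2 + t*(a-u)^2 := by
      nlinarith [mul_pos (mul_pos hs ht) h1]
    have h2 : s*((a-x)^2/(2*γ)) + t*((a-u)^2/(2*γ)) = (s*(a-x)^2 + t*(a-u)^2)/(2*γ) := by
      ring
    rw [h2]
    gcongr
  have hgsc : StrictConvexOn ℝ (Set.univ : Set ℝ) g := by
    have h1 : ConvexOn ℝ (Set.univ : Set ℝ) (fun x => ℓ y x - ℓ 0 0) := by
      exact (hℓconv y).sub (concaveOn_const (ℓ 0 0) convex_univ)
    exact h1.add_strictConvexOn hquad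
  have hxsu : ∀ x : ℝ, (∀ t : ℝ, g x ≤ g t) → x = xs := by
    intro x hx
    exact hgsc.eq_of_isMinOn (isMinOn_iff.mpr fun t _ => hx t)
      (isMinOn_iff.mpr fun t _ => hxs t) trivial trivial
  -- derivative condition at the minimizer
  have hderivg : ∀ x : ℝ, HasDerivAt g (deriv (ℓ y) x + (x - a)/γ) x := by
    intro x
    have h1 : HasDerivAt (fun t : ℝ => (a - t)^2/(2*γ)) ((x - a)/γ) x := by
      have h : HasDerivAt (fun t : ℝ => (a - t)^2) (2*(a-x)*(-1)) x := by
        exact (((hasDerivAt_id x).const_sub a).pow 2).congr_deriv (by simp)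
      have h2 := h.div_const (2*γ)
      rw [show (x - a)/γ = 2*(a-x)*(-1)/(2*γ) by field_simp; ring]; exact h2
    exact (((hlyd x).hasDerivAt).sub_const (ℓ 0 0)).add h1
  have hd : deriv (ℓ y) xs = (a - xs)/γ := by
    have h0 : deriv g xs = 0 := by
      have : IsLocalMin g xs := Filter.Eventually.of_forall (fun t => hxs t)
      exact this.deriv_eq_zero
    have h1 : deriv g xs = deriv (ℓ y) xs + (xs - a)/γ := (hderivg xs).deriv
    rw [h1] at h0
    have : deriv (ℓ y) xs = -((xs - a)/γ) := by linarith
    rw [this]; field_simp; ring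
  -- the minimizer
  set θt : Fin p → ℝ := fun j => θh j + ((xs - a)/q) * w j with hθt
  have hzθt : dotp z θt = xs := by
    have h1 : dotp z θt = a + ((xs - a)/q) * q := by
      simp only [hθt, dotp, mul_add, Finset.sum_add_distrib, ha]
      congr 1
      rw [hqdef, dotp, Finset.mul_sum]
      exact Finset.sum_congr rfl fun i _ => by ring
    rw [h1]; field_simp; ring
  -- quadSurrogate expansion and lower bound
  have hFform : ∀ θ : Fin p → ℝ, quadSurrogate p n ℓ y z θh c0 H θ =
      c0 + (1 / (n:ℝ)) * (ℓ y (dotp z θ) - ℓ 0 0) +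
        (1/2) * ((θ - θh) ⬝ᵥ H.mulVec (θ - θh)) := by
    intro θ
    rw [quadSurrogate, hcomm θ z]
    rfl
  have hzdiff : ∀ θ : Fin p → ℝ, z ⬝ᵥ (θ - θh) = dotp z θ - a := by
    intro θ
    simp only [dotProduct, Pi.sub_apply, dotp, ha, mul_sub, Finset.sum_sub_distrib]
  have hlower : ∀ θ : Fin p → ℝ,
      c0 + (1 / (n:ℝ)) * g (dotp z θ) ≤ quadSurrogate p n ℓ y z θh c0 H θ := by
    intro θ
    rw [hFform θ]
    have h1 : (dotp z θ - a)^2 / q ≤ (θ - θh) ⬝ᵥ H.mulVec (θ - θh) := by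
      have := hCS (θ - θh)
      rwa [hzdiff θ] at this
    have h2 : (1 / (n:ℝ)) * ((a - dotp z θ)^2 / (2*γ)) = (dotp z θ - a)^2 / q / 2 := by
      rw [← hγn]; field_simp; ring
    simp only [hg]
    have h3 : (1 / (n:ℝ)) * (ℓ y (dotp z θ) - ℓ 0 0 + (a - dotp z θ) ^ 2 / (2 * γ)) =
        (1 / (n:ℝ)) * (ℓ y (dotp z θ) - ℓ 0 0) + (dotp z θ - a)^2 / q / 2 := by
      rw [mul_add, h2]
    rw [h3]
    linarith
  -- value at θt
  have hδt : (θt - θh : Fin p → ℝ) = ((xs - a)/q) • w := by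
    funext j
    simp [hθt, smul_eq_mul]
  have hFθt : quadSurrogate p n ℓ y z θh c0 H θt = c0 + (1 / (n:ℝ)) * g xs := by
    rw [hFform θt, hzθt, hδt]
    have h1 : (((xs - a)/q) • w) ⬝ᵥ H.mulVec (((xs - a)/q) • w) = ((xs - a)/q)^2 * q := by
      rw [Matrix.mulVec_smul, smul_dotProduct, dotProduct_smul, hwHw,
        smul_eq_mul, smul_eq_mul]
      ring
    rw [h1]
    simp only [hg]
    rw [← hγn]
    have hq0 : q ≠ 0 := hqpos.ne'
    field_simp
    ring
  have hθtmin : ∀ θ : Fin p → ℝ,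
      quadSurrogate p n ℓ y z θh c0 H θt ≤ quadSurrogate p n ℓ y z θh c0 H θ := by
    intro θ
    rw [hFθt]
    calc c0 + (1 / (n:ℝ)) * g xs ≤ c0 + (1 / (n:ℝ)) * g (dotp z θ) := by
          exact add_le_add_right (mul_le_mul_of_nonneg_left (hxs _) (by positivity)) c0
      _ ≤ quadSurrogate p n ℓ y z θh c0 H θ := hlower θ
  refine ⟨hγpos, θt, hθtmin, ?_, ?_, ?_, ?_⟩
  · -- uniqueness
    intro θ' hθ'
    have hFθ' : quadSurrogate p n ℓ y z θh c0 H θ' = c0 + (1 / (n:ℝ)) * g xs := by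
      have h1 := hθ' θt
      have h2 := hθtmin θ'
      rw [hFθt] at h1 h2
      linarith
    set x' : ℝ := dotp z θ' with hx'
    have hgx' : ∀ t : ℝ, g x' ≤ g t := by
      intro t
      have h1 := hlower θ'
      rw [hFθ'] at h1
      have hpos : (0:ℝ) < 1 / n := by positivity
      have h2 : g x' ≤ g xs := by
        have := (mul_le_mul_iff_right₀ hpos).mp (by linarith : (1 / (n:ℝ)) * g x' ≤ (1 / (n:ℝ)) * g xs)
        exact this
      exact h2.trans (hxs t)
    have hx'xs : x' = xs := hxsu x' hgx'
    -- equality in Cauchy–Schwarz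
    have hδ'val : (θ' - θh) ⬝ᵥ H.mulVec (θ' - θh) = (z ⬝ᵥ (θ' - θh))^2 / q := by
      have h1 := hFform θ'
      rw [hFθ', ← hx'] at h1
      have h2 : (1 / (n:ℝ)) * g x' = (1 / (n:ℝ)) * (ℓ y x' - ℓ 0 0) + (x' - a)^2 / q / 2 := by
        simp only [hg]
        rw [mul_add, ← hγn]
        field_simp
        ring
      have hgeq : g x' = g xs := le_antisymm (hgx' xs) (hxs x')
      rw [← hgeq] at h1
      rw [h2] at h1
      rw [hzdiff θ', ← hx']
      linarith
    have hδ'eq := hCSeq (θ' - θh) hδ'val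
    rw [hzdiff θ', ← hx', hx'xs] at hδ'eq
    funext j
    have := congrFun hδ'eq j
    simp only [Pi.sub_apply, Pi.smul_apply, smul_eq_mul] at this
    simp only [hθt]
    linarith
  · -- infimum formula
    have h1 : (⨅ θ : Fin p → ℝ, quadSurrogate p n ℓ y z θh c0 H θ) =
        quadSurrogate p n ℓ y z θh c0 H θt :=
      le_antisymm (ciInf_le ⟨_, by rintro _ ⟨θ, rfl⟩; exact hθtmin θ⟩ θt) (le_ciInf hθtmin)
    have h2 : Moreau ℓ y a γ = g xs := by
      rw [Moreau]
      exact le_antisymm (ciInf_le ⟨g xs, by rintro _ ⟨x, rfl⟩; exact hxs x⟩ xs) (le_ciInf hxs)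
    rw [h1, hFθt, h2]
  · -- fixed point equation
    funext j
    rw [hzθt, hd]
    simp only [hθt]
    have hq0 : q ≠ 0 := hqpos.ne'
    have hγ0 : γ ≠ 0 := hγpos.ne'
    have : (1 / (n:ℝ)) * ((a - xs)/γ) = (a - xs)/q := by
      rw [← hγn, ← div_div]; ring
    rw [this]
    ring
  · -- prox characterization
    intro x
    rw [hzθt]
    exact hxs x
end
end
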